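/- Let k≥3 be an integer. Then for every n∈ℕ: (i) f_{i,j}(n) + 1 = f_{i,j−1}(n) for all integers i,j with k−3≤i≤k−2 and 2−F(k)≤j≤−F(i+1); (ii) f_{k−3,1−F(k)}(a(n)) + 1 = f_{k−2,−F(k−1)}(n); (iii) f_{k−3,1−F(k)}(b(n)) + 1 = f_{k−3,−F(k−2)}(b(n)+1); (iv) f_{k−2,1−F(k)}(n) + 1 = f_{k−3,−F(k−2)}(a(n)+1). -/

import Mathlib

/-- The golden ratio φ = (1 + √5)/2. -/
noncomputable def phi : ℝ := (1 + Real.sqrt 5) / 2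

/-- The lower Wythoff sequence a(n) = ⌊nφ⌋. -/
noncomputable def wa (n : ℕ) : ℕ := ⌊(n : ℝ) * phi⌋₊

/-- The upper Wythoff sequence b(n) = ⌊nφ²⌋. -/
noncomputable def wb (n : ℕ) : ℕ := ⌊(n : ℝ) * phi ^ 2⌋₊

/-- f_{i,j}(n) = F(i+1)·a(n) + F(i)·n − j. -/
noncomputable def fij (i : ℕ) (j : ℤ) (n : ℕ) : ℤ :=
  (Nat.fib (i + 1) : ℤ) * wa n + (Nat.fib i : ℤ) * n - j

lemma sqrt5_lt : Real.sqrt 5 < 2.25 := by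
  nlinarith [Real.sq_sqrt (by norm_num : (5:ℝ) ≥ 0), Real.sqrt_nonneg 5]

lemma sqrt5_gt : (2.2 : ℝ) < Real.sqrt 5 := by
  nlinarith [Real.sq_sqrt (by norm_num : (5:ℝ) ≥ 0), Real.sqrt_nonneg 5]

lemma phi_bounds : 1.6 < phi ∧ phi < 1.7 := by
  constructor <;> (unfold phi; nlinarith [sqrt5_lt, sqrt5_gt])

lemma phi_pos : 0 < phi := by nlinarith [phi_bounds.1]

lemma phi_sq : phi ^ 2 = phi + 1 := by
  unfold phi
  have h := Real.sq_sqrt (by norm_num : (5:ℝ) ≥ 0)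
  ring_nf
  nlinarith [h]

lemma phi_irr : Irrational phi := by
  have h5 : Irrational (Real.sqrt 5) := by
    have : Nat.Prime 5 := by norm_num
    simpa using this.irrational_sqrt
  have := ((h5.ratCast_add (q := 1)).div_natCast (m := 2) (by norm_num))
  unfold phi
  convert this using 2 <;> norm_num

lemma nphi_irr (n : ℕ) (hn : 0 < n) : Irrational ((n : ℝ) * phi) :=
  phi_irr.natCast_mul hn.ne'

lemma frac_lt (n : ℕ) : (n : ℝ) * phi < wa n + 1 := Nat.lt_floor_add_one _

lemma frac_gt (n : ℕ) (hn : 0 < n) : (wa n : ℝ) < (n : ℝ) * phi := by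
  have h0 : 0 ≤ (n : ℝ) * phi := mul_nonneg n.cast_nonneg phi_pos.le
  have hle : (wa n : ℝ) ≤ (n : ℝ) * phi := Nat.floor_le h0
  rcases hle.lt_or_eq with h | h
  · exact h
  · exact absurd h.symm ((nphi_irr n hn).ne_nat (wa n))

lemma wa_floor (n m : ℕ) (h1 : (m : ℝ) ≤ n * phi) (h2 : (n:ℝ) * phi < m + 1) :
    wa n = m := by
  rw [wa, Nat.floor_eq_iff (mul_nonneg n.cast_nonneg phi_pos.le)]
  exact ⟨h1, h2⟩

lemma wb_eq (n : ℕ) : wb n = wa n + n := by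
  have h := frac_lt n
  have h0 : (wa n : ℝ) ≤ (n:ℝ) * phi := Nat.floor_le (mul_nonneg n.cast_nonneg phi_pos.le)
  rw [wb, Nat.floor_eq_iff (mul_nonneg n.cast_nonneg (by positivity))]
  rw [phi_sq]
  push_cast
  constructor <;> nlinarith

lemma wa_wa (n : ℕ) (hn : 0 < n) : wa (wa n) + 1 = wa n + n := by
  have ha := frac_gt n hn
  have hb := frac_lt n
  have hphi := phi_bounds
  have hsq := phi_sq
  have h1 : 1 ≤ wa n + n := by omega
  have key : wa (wa n) = wa n + n - 1 := by
    apply wa_floor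
    · push_cast [Nat.cast_sub h1]
      nlinarith
    · push_cast [Nat.cast_sub h1]
      nlinarith
  omega

lemma wa_wa1 (n : ℕ) (hn : 0 < n) : wa (wa n + 1) = wa n + n + 1 := by
  have ha := frac_gt n hn
  have hb := frac_lt n
  have hphi := phi_bounds
  have hsq := phi_sq
  apply wa_floor <;> push_cast <;> nlinarith

lemma wa_wb (n : ℕ) (hn : 0 < n) : wa (wb n) = 2 * wa n + n := by
  have ha := frac_gt n hn
  have hb := frac_lt n
  have hphi := phi_bounds
  have hsq := phi_sq
  rw [wb_eq]
  apply wa_floor <;> push_cast <;> nlinarith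

lemma wa_wb1 (n : ℕ) (hn : 0 < n) : wa (wb n + 1) = 2 * wa n + n + 1 := by
  have ha := frac_gt n hn
  have hb := frac_lt n
  have hphi := phi_bounds
  have hsq := phi_sq
  rw [wb_eq]
  apply wa_floor <;> push_cast <;> nlinarith

theorem stmt_5 (k : ℕ) (hk : 3 ≤ k) (n : ℕ) (hn : 0 < n) :
    (∀ i : ℕ, ∀ j : ℤ, k - 3 ≤ i → i ≤ k - 2 →
      2 - (Nat.fib k : ℤ) ≤ j → j ≤ -(Nat.fib (i + 1) : ℤ) →
      fij i j n + 1 = fij i (j - 1) n) ∧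
    fij (k - 3) (1 - (Nat.fib k : ℤ)) (wa n) + 1 = fij (k - 2) (-(Nat.fib (k - 1) : ℤ)) n ∧
    fij (k - 3) (1 - (Nat.fib k : ℤ)) (wb n) + 1 =
      fij (k - 3) (-(Nat.fib (k - 2) : ℤ)) (wb n + 1) ∧
    fij (k - 2) (1 - (Nat.fib k : ℤ)) n + 1 =
      fij (k - 3) (-(Nat.fib (k - 2) : ℤ)) (wa n + 1) := by
  obtain ⟨m, rfl⟩ : ∃ m, k = m + 3 := ⟨k - 3, by omega⟩
  have e3 : m + 3 - 3 = m := by omega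
  have e2 : m + 3 - 2 = m + 1 := by omega
  have e1 : m + 3 - 1 = m + 2 := by omega
  rw [e3, e2, e1]
  have f2 : Nat.fib (m + 2) = Nat.fib m + Nat.fib (m + 1) := Nat.fib_add_two
  have f2' : Nat.fib (m + 1 + 1) = Nat.fib m + Nat.fib (m + 1) := Nat.fib_add_two
  have f3 : Nat.fib (m + 3) = Nat.fib (m + 1) + Nat.fib (m + 2) := Nat.fib_add_two
  have h1 := wa_wa n hn
  have h2 := wa_wa1 n hn
  have h3 := wa_wb n hn
  have h4 := wa_wb1 n hn
  have h5 := wb_eq n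
  have h1' : (wa (wa n) : ℤ) = (wa n : ℤ) + n - 1 := by omega
  refine ⟨fun i j _ _ _ _ => by simp [fij]; ring, ?_, ?_, ?_⟩
  · simp only [fij, h1']
    push_cast [f3, f2', f2]
    ring
  · simp only [fij]
    rw [h4, h3, h5]
    push_cast [f3, f2', f2]
    ring
  · simp only [fij]
    rw [h2]
    push_cast [f3, f2', f2]
    ring
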